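/- Let E be a homogeneous Moran set with parameters ([0,1], {n_k}, {r_k}) such that Δ_k > 0 for all k and γ := inf_{k≥1} Δ_k/Δ_{k+1} > 1. Then for every k ≥ 1 and every connected component U of the k-th approximation E_k, the set U ∩ E is (2/(γ−1))·Δ_k-connected; indeed, every complementary gap of U ∩ E has length at most 2·Σ_{j=1}^{∞} Δ_{k+j} ≤ (2/(γ−1))·Δ_k. -/

import Mathlib

open Set MeasureTheory
open scoped ENNReal

/-- `σ = (σ₁, …, σ_k)` is a valid word for the sequence `n`: its `i`-th entry
(1-based position `i+1` for 0-based index `i`) is smaller than `n (i+1)`. -/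
def IsWord (n : ℕ → ℕ) (σ : List ℕ) : Prop :=
  ∀ i : Fin σ.length, σ.get i < n (i + 1)

/-- A homogeneous Moran structure with parameters `([0,1], {n_k}, {r_k})`:
a family of closed intervals `J σ` indexed by words, with `J ∅ = [0,1]`,
nested, with pairwise disjoint interiors at each level, and
`|J (σ*i)| = r_{k} |J σ|` for `σ` of length `k-1`. -/
structure MoranStructure (n : ℕ → ℕ) (r : ℕ → ℝ) where
  J : List ℕ → Set ℝ
  J_empty : J [] = Set.Icc 0 1
  J_closedInterval : ∀ σ : List ℕ, IsWord n σ → ∃ a b : ℝ, a ≤ b ∧ J σ = Set.Icc a b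
  J_subset : ∀ σ : List ℕ, IsWord n σ → ∀ i < n (σ.length + 1), J (σ ++ [i]) ⊆ J σ
  J_disjointInterior : ∀ σ : List ℕ, IsWord n σ → ∀ i < n (σ.length + 1),
      ∀ j < n (σ.length + 1), i ≠ j →
      interior (J (σ ++ [i])) ∩ interior (J (σ ++ [j])) = ∅
  J_diam : ∀ σ : List ℕ, IsWord n σ → ∀ i < n (σ.length + 1),
      Metric.diam (J (σ ++ [i])) = r (σ.length + 1) * Metric.diam (J σ)

variable {n : ℕ → ℕ} {r : ℕ → ℝ}

/-- The `k`-th approximation `E_k`: the union of all basic intervals of rank `k`. -/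
def MoranStructure.approx (M : MoranStructure n r) (k : ℕ) : Set ℝ :=
  ⋃ σ ∈ {σ : List ℕ | σ.length = k ∧ IsWord n σ}, M.J σ

/-- The homogeneous Moran set `E = ⋂_k E_k`. -/
def MoranStructure.moranSet (M : MoranStructure n r) : Set ℝ :=
  ⋂ k, M.approx k

/-- The total gap of rank `k`: `Δ_k = r_1 ⋯ r_{k-1} (1 - n_k r_k)`. -/
noncomputable def totalGap (n : ℕ → ℕ) (r : ℕ → ℝ) (k : ℕ) : ℝ :=
  (∏ j ∈ Finset.Icc 1 (k - 1), r j) * (1 - (n k : ℝ) * r k)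

/-- Distance between two subsets of `ℝ`: `dist(A,B) = inf {|x-y| : x ∈ A, y ∈ B}`. -/
noncomputable def setDist (A B : Set ℝ) : ℝ :=
  sInf {d : ℝ | ∃ x ∈ A, ∃ y ∈ B, d = |x - y|}

/-- The weak separation condition with constant `η₀`. -/
def MoranStructure.WSC (M : MoranStructure n r) (η₀ : ℝ) : Prop :=
  ∀ σ : List ℕ, IsWord n σ → ∀ i < n (σ.length + 1), ∀ j < n (σ.length + 1), i ≠ j →
    (M.J (σ ++ [i]) ∩ M.J (σ ++ [j])).Nonempty ∨
      setDist (M.J (σ ++ [i])) (M.J (σ ++ [j])) >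
        η₀ * (Metric.diam (M.J σ) -
          ∑ m ∈ Finset.range (n (σ.length + 1)), Metric.diam (M.J (σ ++ [m])))

/-- `μ` is the uniform Bernoulli measure of the Moran structure `M`:
a Borel probability measure concentrated on the Moran set, giving each
cylinder of rank `k` measure `1/(n_1 ⋯ n_k)`. -/
def IsUniformBernoulli (M : MoranStructure n r) (μ : Measure ℝ) : Prop :=
  IsProbabilityMeasure μ ∧ μ M.moranSetᶜ = 0 ∧
    ∀ σ : List ℕ, IsWord n σ →
      μ (M.J σ ∩ M.moranSet) = 1 / ∏ j ∈ Finset.Icc 1 σ.length, (n j : ℝ≥0∞)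

/-- `I` is a connected component of the set `S ⊆ ℝ`. -/
def IsCC (S I : Set ℝ) : Prop := ∃ x ∈ S, I = connectedComponentIn S x

/-- `X` is `δ`-connected: any two points of `X` are joined by a finite chain
of points of `X` with consecutive distances at most `δ`. -/
def DeltaConnected (δ : ℝ) (X : Set ℝ) : Prop :=
  ∀ x ∈ X, ∀ y ∈ X, ∃ (m : ℕ) (z : Fin (m + 1) → ℝ),
    (∀ i, z i ∈ X) ∧ z 0 = x ∧ z (Fin.last m) = y ∧
      ∀ i : Fin m, |z i.castSucc - z i.succ| ≤ δ
lemma isWord_nil : IsWord n [] := fun i => i.elim0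

lemma isWord_iff {σ : List ℕ} : IsWord n σ ↔ ∀ m (h : m < σ.length), σ[m] < n (m + 1) := by
  constructor
  · intro h m hm; exact h ⟨m, hm⟩
  · intro h i; exact h i i.isLt

lemma isWord_append {σ : List ℕ} {i : ℕ} :
    IsWord n (σ ++ [i]) ↔ IsWord n σ ∧ i < n (σ.length + 1) := by
  simp only [isWord_iff, List.length_append, List.length_singleton]
  constructor
  · intro h
    refine ⟨fun m hm => ?_, ?_⟩
    · have := h m (by omega)
      rwa [List.getElem_append_left hm] at this
    · have := h σ.length (by omega)
      rw [List.getElem_append_right (le_refl _)] at this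
      simpa using this
  · intro ⟨h1, h2⟩ m hm
    rcases lt_or_ge m σ.length with hlt | hge
    · rw [List.getElem_append_left hlt]; exact h1 m hlt
    · have hm' : m = σ.length := by omega
      subst hm'
      rw [List.getElem_append_right (le_refl _)]
      simpa using h2

lemma isWord_prefix {τ σ : List ℕ} (hp : τ <+: σ) (h : IsWord n σ) : IsWord n τ := by
  rw [isWord_iff] at h ⊢
  intro m hm
  rw [hp.getElem hm]
  exact h m (lt_of_lt_of_le hm hp.length_le)
lemma MoranStructure.J_prefix (M : MoranStructure n r) {σ τ : List ℕ}
    (hw : IsWord n σ) (hp : τ <+: σ) : M.J σ ⊆ M.J τ := by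
  induction σ using List.reverseRecOn with
  | nil => rw [List.prefix_nil.mp hp]
  | append_singleton ρ i ih =>
    rcases le_or_gt τ.length ρ.length with hle | hlt
    · have hτρ : τ <+: ρ := List.prefix_of_prefix_length_le hp (ρ.prefix_append [i]) hle
      have hwρ : IsWord n ρ := (isWord_append.mp hw).1
      exact (M.J_subset ρ hwρ i (isWord_append.mp hw).2).trans (ih hwρ hτρ)
    · have : τ = ρ ++ [i] := hp.eq_of_length (by have := hp.length_le; simp at this ⊢; omega)
      rw [this]

lemma MoranStructure.diam_J (M : MoranStructure n r) {σ : List ℕ} (hw : IsWord n σ) :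
    Metric.diam (M.J σ) = ∏ j ∈ Finset.Icc 1 σ.length, r j := by
  induction σ using List.reverseRecOn with
  | nil => simp [M.J_empty, Real.diam_Icc zero_le_one]
  | append_singleton ρ i ih =>
    have hwρ : IsWord n ρ := (isWord_append.mp hw).1
    rw [M.J_diam ρ hwρ i (isWord_append.mp hw).2, ih hwρ]
    rw [List.length_append, List.length_singleton,
      Finset.prod_Icc_succ_top (Nat.le_add_left 1 ρ.length)]
    ring

lemma prod_r_pos (hr : ∀ k ≥ 1, 0 < r k ∧ (n k : ℝ) * r k ≤ 1) (m : ℕ) :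
    0 < ∏ j ∈ Finset.Icc 1 m, r j := by
  apply Finset.prod_pos
  intro j hj
  exact (hr j (Finset.mem_Icc.mp hj).1).1

lemma MoranStructure.volume_J (M : MoranStructure n r) {σ : List ℕ} (hw : IsWord n σ) :
    volume (M.J σ) = ENNReal.ofReal (∏ j ∈ Finset.Icc 1 σ.length, r j) := by
  obtain ⟨a, b, hab, heq⟩ := M.J_closedInterval σ hw
  have hd : b - a = ∏ j ∈ Finset.Icc 1 σ.length, r j := by
    rw [← M.diam_J hw, heq, Real.diam_Icc hab]
  rw [heq, Real.volume_Icc, hd]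

lemma finite_words (n : ℕ → ℕ) : ∀ k, {σ : List ℕ | σ.length = k ∧ IsWord n σ}.Finite := by
  intro k
  induction k with
  | zero =>
    apply Set.Finite.subset (Set.finite_singleton ([] : List ℕ))
    intro σ ⟨h1, _⟩
    simpa using List.length_eq_zero_iff.mp h1
  | succ k ih =>
    apply Set.Finite.subset ((ih.prod (Set.finite_Iio (n (k+1)))).image
      (fun p : List ℕ × ℕ => p.1 ++ [p.2]))
    rintro σ ⟨h1, h2⟩
    have hne : σ ≠ [] := by intro h; rw [h] at h1; simp at h1
    have hσ : σ.dropLast ++ [σ.getLast hne] = σ := List.dropLast_append_getLast hne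
    have hw' : IsWord n (σ.dropLast ++ [σ.getLast hne]) := by rw [hσ]; exact h2
    have hlen : σ.dropLast.length = k := by
      simp [List.length_dropLast, h1]
    refine ⟨⟨σ.dropLast, σ.getLast hne⟩, ⟨⟨hlen, (isWord_append.mp hw').1⟩, ?_⟩, hσ⟩
    have := (isWord_append.mp hw').2
    rwa [hlen] at this

lemma MoranStructure.isClosed_approx (M : MoranStructure n r) (k : ℕ) :
    IsClosed (M.approx k) := by
  apply Set.Finite.isClosed_biUnion (finite_words n k)
  rintro σ ⟨_, hw⟩
  obtain ⟨a, b, _, heq⟩ := M.J_closedInterval σ hw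
  rw [heq]; exact isClosed_Icc

lemma MoranStructure.approx_antitone (M : MoranStructure n r) (k : ℕ) :
    M.approx (k + 1) ⊆ M.approx k := by
  intro x hx
  simp only [MoranStructure.approx, Set.mem_iUnion] at hx ⊢
  obtain ⟨σ, ⟨h1, h2⟩, hxσ⟩ := hx
  have hne : σ ≠ [] := by intro h; rw [h] at h1; simp at h1
  have hσ : σ.dropLast ++ [σ.getLast hne] = σ := List.dropLast_append_getLast hne
  refine ⟨σ.dropLast, ⟨by simp [List.length_dropLast, h1], isWord_prefix (List.dropLast_prefix σ) h2⟩, ?_⟩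
  exact M.J_prefix h2 (List.dropLast_prefix σ) hxσ

lemma MoranStructure.approx_le (M : MoranStructure n r) {k m : ℕ} (h : k ≤ m) :
    M.approx m ⊆ M.approx k := by
  induction m with
  | zero =>
    have : k = 0 := by omega
    exact this ▸ subset_rfl
  | succ m ih =>
    rcases Nat.eq_or_lt_of_le h with he | hlt
    · exact he ▸ subset_rfl
    · exact (M.approx_antitone m).trans (ih (by omega))

lemma MoranStructure.nonempty_J_inter_moranSet (M : MoranStructure n r)
    (hn : ∀ k ≥ 1, 2 ≤ n k) {σ : List ℕ} (hw : IsWord n σ) :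
    (M.J σ ∩ M.moranSet).Nonempty := by
  set t : ℕ → Set ℝ := fun m => M.J (σ ++ List.replicate m 0) with ht
  have hword : ∀ m, IsWord n (σ ++ List.replicate m 0) := by
    intro m
    induction m with
    | zero => simpa using hw
    | succ m ih =>
      rw [List.replicate_succ', ← List.append_assoc]
      refine isWord_append.mpr ⟨ih, ?_⟩
      have := hn (σ.length + m + 1) (by omega)
      have hl : (σ ++ List.replicate m 0).length = σ.length + m := by simp
      rw [hl]; omega
  have hsub : ∀ m, t (m+1) ⊆ t m := by
    intro m
    simp only [ht, List.replicate_succ', ← List.append_assoc]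
    apply M.J_subset _ (hword m)
    have := hn ((σ ++ List.replicate m 0).length + 1) (by omega)
    omega
  have hicc : ∀ m, ∃ a b : ℝ, a ≤ b ∧ t m = Set.Icc a b := fun m =>
    M.J_closedInterval _ (hword m)
  have hne : ∀ m, (t m).Nonempty := by
    intro m; obtain ⟨a, b, hab, heq⟩ := hicc m; rw [heq]; exact ⟨a, le_refl a, hab⟩
  have hcl : ∀ m, IsClosed (t m) := by
    intro m; obtain ⟨a, b, _, heq⟩ := hicc m; rw [heq]; exact isClosed_Icc
  have hcomp : IsCompact (t 0) := by
    obtain ⟨a, b, _, heq⟩ := hicc 0; rw [heq]; exact isCompact_Icc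
  obtain ⟨x, hx⟩ := IsCompact.nonempty_iInter_of_sequence_nonempty_isCompact_isClosed
    t hsub hne hcomp hcl
  simp only [Set.mem_iInter] at hx
  refine ⟨x, ?_, ?_⟩
  · have := hx 0; simpa [ht] using this
  · intro Ek hEk
    simp only [Set.mem_range] at hEk
    obtain ⟨m, rfl⟩ := hEk
    set τ : List ℕ := (σ ++ List.replicate m 0).take m with hτ
    have hlenτ : τ.length = m := by simp [hτ]
    have hwτ : IsWord n τ := isWord_prefix (List.take_prefix _ _) (hword m)
    have hxτ : x ∈ M.J τ := M.J_prefix (hword m) (List.take_prefix _ _) (hx m)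
    exact Set.mem_biUnion ⟨hlenτ, hwτ⟩ hxτ
lemma exists_split : ∀ (σ₁ σ₂ : List ℕ), σ₁.length = σ₂.length → σ₁ ≠ σ₂ →
    ∃ (τ ρ₁ ρ₂ : List ℕ) (i j : ℕ), i ≠ j ∧ σ₁ = τ ++ i :: ρ₁ ∧ σ₂ = τ ++ j :: ρ₂ := by
  intro σ₁
  induction σ₁ with
  | nil =>
    intro σ₂ hlen hne
    exact absurd (List.length_eq_zero_iff.mp hlen.symm).symm hne
  | cons a l₁ ih =>
    intro σ₂ hlen hne
    match σ₂ with
    | [] => simp at hlen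
    | b :: l₂ =>
      rcases eq_or_ne a b with rfl | hab
      · have hl : l₁ ≠ l₂ := by intro h; exact hne (by rw [h])
        obtain ⟨τ, ρ₁, ρ₂, i, j, hij, h1, h2⟩ := ih l₂ (by simpa using hlen) hl
        exact ⟨a :: τ, ρ₁, ρ₂, i, j, hij, by rw [h1]; rfl, by rw [h2]; rfl⟩
      · exact ⟨[], l₁, l₂, a, b, hab, rfl, rfl⟩

lemma MoranStructure.interior_disjoint (M : MoranStructure n r) {σ₁ σ₂ : List ℕ}
    (hw₁ : IsWord n σ₁) (hw₂ : IsWord n σ₂) (hlen : σ₁.length = σ₂.length)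
    (hne : σ₁ ≠ σ₂) : interior (M.J σ₁) ∩ interior (M.J σ₂) = ∅ := by
  obtain ⟨τ, ρ₁, ρ₂, i, j, hij, h1, h2⟩ := exists_split σ₁ σ₂ hlen hne
  have hp₁ : (τ ++ [i]) <+: σ₁ := ⟨ρ₁, by rw [h1]; simp⟩
  have hp₂ : (τ ++ [j]) <+: σ₂ := ⟨ρ₂, by rw [h2]; simp⟩
  have hwi : IsWord n (τ ++ [i]) := isWord_prefix hp₁ hw₁
  have hwj : IsWord n (τ ++ [j]) := isWord_prefix hp₂ hw₂
  have hd := M.J_disjointInterior τ (isWord_append.mp hwi).1 i (isWord_append.mp hwi).2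
    j (isWord_append.mp hwj).2 hij
  apply Set.eq_empty_of_subset_empty
  calc interior (M.J σ₁) ∩ interior (M.J σ₂)
      ⊆ interior (M.J (τ ++ [i])) ∩ interior (M.J (τ ++ [j])) :=
        Set.inter_subset_inter (interior_mono (M.J_prefix hw₁ hp₁))
          (interior_mono (M.J_prefix hw₂ hp₂))
    _ = ∅ := hd

lemma MoranStructure.gap_volume (M : MoranStructure n r)
    (hr : ∀ k ≥ 1, 0 < r k ∧ (n k : ℝ) * r k ≤ 1) {σ : List ℕ} (hw : IsWord n σ) :
    volume (M.J σ \ M.approx (σ.length + 1)) ≤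
      ENNReal.ofReal (totalGap n r (σ.length + 1)) := by
  set m := σ.length with hm
  set N := n (m + 1) with hN
  set P := ∏ j ∈ Finset.Icc 1 m, r j with hP
  set W := ⋃ i ∈ Finset.range N, M.J (σ ++ [i]) with hW
  have hwchild : ∀ i < N, IsWord n (σ ++ [i]) := fun i hi => isWord_append.mpr ⟨hw, hi⟩
  have hWsub : W ⊆ M.approx (m + 1) := by
    intro x hx
    simp only [hW, Set.mem_iUnion, Finset.mem_range] at hx
    obtain ⟨i, hi, hxi⟩ := hx
    exact Set.mem_biUnion ⟨by simp [hm], hwchild i hi⟩ hxi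
  have hWJ : W ⊆ M.J σ := by
    intro x hx
    simp only [hW, Set.mem_iUnion, Finset.mem_range] at hx
    obtain ⟨i, hi, hxi⟩ := hx
    exact M.J_subset σ hw i hi hxi
  have hchildvol : ∀ i < N, volume (interior (M.J (σ ++ [i]))) = ENNReal.ofReal (r (m+1) * P) := by
    intro i hi
    obtain ⟨a, b, hab, heq⟩ := M.J_closedInterval _ (hwchild i hi)
    have hd : b - a = r (m+1) * P := by
      have := M.diam_J (hwchild i hi)
      rw [heq, Real.diam_Icc hab] at this
      rw [this]
      simp only [List.length_append, List.length_singleton]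
      rw [Finset.prod_Icc_succ_top (Nat.le_add_left 1 m)]
      ring
    rw [heq, interior_Icc, Real.volume_Ioo, hd]
  have hWvol : ENNReal.ofReal ((N : ℝ) * (r (m+1) * P)) ≤ volume W := by
    have hsub : (⋃ i ∈ Finset.range N, interior (M.J (σ ++ [i]))) ⊆ W := by
      apply Set.iUnion₂_mono
      intro i _
      exact interior_subset
    have hdisj : (↑(Finset.range N) : Set ℕ).PairwiseDisjoint
        (fun i => interior (M.J (σ ++ [i]))) := by
      intro i hi j hj hij
      simp only [Finset.coe_range, Set.mem_Iio] at hi hj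
      exact Set.disjoint_iff_inter_eq_empty.mpr (M.J_disjointInterior σ hw i hi j hj hij)
    have hmeas : ∀ i ∈ Finset.range N, MeasurableSet (interior (M.J (σ ++ [i]))) :=
      fun i _ => isOpen_interior.measurableSet
    calc ENNReal.ofReal ((N : ℝ) * (r (m+1) * P))
        = ∑ i ∈ Finset.range N, ENNReal.ofReal (r (m+1) * P) := by
          rw [Finset.sum_const, Finset.card_range, nsmul_eq_mul,
            ENNReal.ofReal_mul (by positivity), ENNReal.ofReal_natCast]
      _ = ∑ i ∈ Finset.range N, volume (interior (M.J (σ ++ [i]))) := by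
          apply Finset.sum_congr rfl
          intro i hi
          rw [hchildvol i (Finset.mem_range.mp hi)]
      _ = volume (⋃ i ∈ Finset.range N, interior (M.J (σ ++ [i]))) :=
          (measure_biUnion_finset hdisj hmeas).symm
      _ ≤ volume W := measure_mono hsub
  have hWmeas : MeasurableSet W := by
    apply Finset.measurableSet_biUnion
    intro i hi
    obtain ⟨a, b, _, heq⟩ := M.J_closedInterval _ (hwchild i (Finset.mem_range.mp hi))
    rw [heq]; exact measurableSet_Icc
  have hWfin : volume W ≠ ⊤ := by
    apply ne_of_lt
    obtain ⟨a, b, _, heq⟩ := M.J_closedInterval σ hw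
    exact lt_of_le_of_lt (measure_mono (hWJ.trans heq.subset)) (by rw [Real.volume_Icc]; exact ENNReal.ofReal_lt_top)
  have hrm : 0 < r (m+1) := (hr (m+1) (by omega)).1
  have hPpos : 0 < P := prod_r_pos hr m
  calc volume (M.J σ \ M.approx (m + 1))
      ≤ volume (M.J σ \ W) := measure_mono (Set.diff_subset_diff_right hWsub)
    _ = volume (M.J σ) - volume W := measure_diff hWJ hWmeas.nullMeasurableSet hWfin
    _ ≤ ENNReal.ofReal P - ENNReal.ofReal ((N : ℝ) * (r (m+1) * P)) := by
        rw [M.volume_J hw]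
        exact tsub_le_tsub le_rfl hWvol
    _ = ENNReal.ofReal (P - (N : ℝ) * (r (m+1) * P)) := by
        rw [ENNReal.ofReal_sub _ (by positivity)]
    _ = ENNReal.ofReal (totalGap n r (m + 1)) := by
        unfold totalGap
        simp only [Nat.add_sub_cancel]
        rw [← hP, ← hN]
        ring_nf
lemma vol_biUnion_subsingleton {S : Set (List ℕ)} (hS : S.Subsingleton)
    {f : List ℕ → Set ℝ} {C : ℝ≥0∞} (h : ∀ σ ∈ S, volume (f σ) ≤ C) :
    volume (⋃ σ ∈ S, f σ) ≤ C := by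
  rcases hS.eq_empty_or_singleton with rfl | ⟨σ, rfl⟩
  · simp
  · simpa using h σ rfl

lemma MoranStructure.level_bound (M : MoranStructure n r)
    (hn : ∀ k ≥ 1, 2 ≤ n k) (hr : ∀ k ≥ 1, 0 < r k ∧ (n k : ℝ) * r k ≤ 1)
    {a b : ℝ} (hab : a < b) {m : ℕ}
    (hemp : Set.Ioo a b ∩ M.moranSet = ∅) :
    volume ((Set.Ioo a b ∩ M.approx m) \ M.approx (m + 1)) ≤
      2 * ENNReal.ofReal (totalGap n r (m + 1)) := by
  classical
  set Sa := {σ : List ℕ | σ.length = m ∧ IsWord n σ ∧ a ∈ M.J σ ∧ (M.J σ ∩ Set.Ioo a b).Nonempty}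
  set Sb := {σ : List ℕ | σ.length = m ∧ IsWord n σ ∧ b ∈ M.J σ ∧ (M.J σ ∩ Set.Ioo a b).Nonempty}
  have hSa : Sa.Subsingleton := by
    rintro σ₁ ⟨hl₁, hw₁, ha₁, y₁, hy₁J, hy₁⟩ σ₂ ⟨hl₂, hw₂, ha₂, y₂, hy₂J, hy₂⟩
    by_contra hne
    have hd := M.interior_disjoint hw₁ hw₂ (hl₁.trans hl₂.symm) hne
    obtain ⟨a₁, b₁, hab₁, he₁⟩ := M.J_closedInterval σ₁ hw₁
    obtain ⟨a₂, b₂, hab₂, he₂⟩ := M.J_closedInterval σ₂ hw₂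
    rw [he₁] at ha₁ hy₁J; rw [he₂] at ha₂ hy₂J
    set t := (a + min b₁ b₂) / 2 with htdef
    have hta : a < t := by
      have h1 : a < b₁ := lt_of_lt_of_le hy₁.1 hy₁J.2
      have h2 : a < b₂ := lt_of_lt_of_le hy₂.1 hy₂J.2
      simp only [htdef]; rcases le_total b₁ b₂ with h | h <;> simp [min_eq_left, min_eq_right, h] <;> linarith
    have ht1 : t ∈ interior (M.J σ₁) := by
      rw [he₁, interior_Icc]
      constructor
      · exact lt_of_le_of_lt ha₁.1 hta
      · have : t < min b₁ b₂ := by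
          have h1 : a < b₁ := lt_of_lt_of_le hy₁.1 hy₁J.2
          have h2 : a < b₂ := lt_of_lt_of_le hy₂.1 hy₂J.2
          simp only [htdef, lt_min_iff] at *
          constructor <;> linarith [min_le_left b₁ b₂, min_le_right b₁ b₂, le_min h1.le h2.le]
        exact lt_of_lt_of_le this (min_le_left b₁ b₂)
    have ht2 : t ∈ interior (M.J σ₂) := by
      rw [he₂, interior_Icc]
      constructor
      · exact lt_of_le_of_lt ha₂.1 hta
      · have : t < min b₁ b₂ := by
          have h1 : a < b₁ := lt_of_lt_of_le hy₁.1 hy₁J.2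
          have h2 : a < b₂ := lt_of_lt_of_le hy₂.1 hy₂J.2
          simp only [htdef, lt_min_iff] at *
          constructor <;> linarith [min_le_left b₁ b₂, min_le_right b₁ b₂]
        exact lt_of_lt_of_le this (min_le_right b₁ b₂)
    exact absurd hd (by rw [Set.eq_empty_iff_forall_notMem]; push_neg; exact ⟨t, ht1, ht2⟩)
  have hSb : Sb.Subsingleton := by
    rintro σ₁ ⟨hl₁, hw₁, hb₁, y₁, hy₁J, hy₁⟩ σ₂ ⟨hl₂, hw₂, hb₂, y₂, hy₂J, hy₂⟩
    by_contra hne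
    have hd := M.interior_disjoint hw₁ hw₂ (hl₁.trans hl₂.symm) hne
    obtain ⟨a₁, b₁, hab₁, he₁⟩ := M.J_closedInterval σ₁ hw₁
    obtain ⟨a₂, b₂, hab₂, he₂⟩ := M.J_closedInterval σ₂ hw₂
    rw [he₁] at hb₁ hy₁J; rw [he₂] at hb₂ hy₂J
    set t := (max a₁ a₂ + b) / 2 with htdef
    have h1 : a₁ < b := lt_of_le_of_lt hy₁J.1 hy₁.2
    have h2 : a₂ < b := lt_of_le_of_lt hy₂J.1 hy₂.2
    have htb : t < b := by
      simp only [htdef]; rcases le_total a₁ a₂ with h | h <;> simp [max_eq_left, max_eq_right, h] <;> linarith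
    have hmaxt : max a₁ a₂ < t := by
      simp only [htdef]; rcases le_total a₁ a₂ with h | h <;> simp [max_eq_left, max_eq_right, h] <;> linarith
    have ht1 : t ∈ interior (M.J σ₁) := by
      rw [he₁, interior_Icc]
      exact ⟨lt_of_le_of_lt (le_max_left a₁ a₂) hmaxt, lt_of_lt_of_le htb hb₁.2⟩
    have ht2 : t ∈ interior (M.J σ₂) := by
      rw [he₂, interior_Icc]
      exact ⟨lt_of_le_of_lt (le_max_right a₁ a₂) hmaxt, lt_of_lt_of_le htb hb₂.2⟩
    exact absurd hd (by rw [Set.eq_empty_iff_forall_notMem]; push_neg; exact ⟨t, ht1, ht2⟩)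
  have hcover : (Set.Ioo a b ∩ M.approx m) \ M.approx (m + 1) ⊆
      (⋃ σ ∈ Sa, M.J σ \ M.approx (m + 1)) ∪ (⋃ σ ∈ Sb, M.J σ \ M.approx (m + 1)) := by
    intro x ⟨⟨hx, hxm⟩, hxn⟩
    simp only [MoranStructure.approx, Set.mem_iUnion] at hxm
    obtain ⟨σ, ⟨hlσ, hwσ⟩, hxσ⟩ := hxm
    have hmem : a ∈ M.J σ ∨ b ∈ M.J σ := by
      by_contra hcon
      push_neg at hcon
      obtain ⟨a', b', hab', he'⟩ := M.J_closedInterval σ hwσ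
      rw [he'] at hxσ hcon
      have hJsub : M.J σ ⊆ Set.Ioo a b := by
        rw [he']
        intro z hz
        have ha' : a < a' := by
          by_contra h
          push_neg at h
          exact hcon.1 ⟨h, hx.1.le.trans hxσ.2⟩
        have hb' : b' < b := by
          by_contra h
          push_neg at h
          exact hcon.2 ⟨hxσ.1.trans hx.2.le, h⟩
        exact ⟨lt_of_lt_of_le ha' hz.1, lt_of_le_of_lt hz.2 hb'⟩
      obtain ⟨y, hyJ, hyE⟩ := M.nonempty_J_inter_moranSet hn hwσ
      have : y ∈ Set.Ioo a b ∩ M.moranSet := ⟨hJsub hyJ, hyE⟩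
      rw [hemp] at this
      exact this
    rcases hmem with h | h
    · exact Or.inl (Set.mem_biUnion ⟨hlσ, hwσ, h, ⟨x, hxσ, hx⟩⟩ ⟨hxσ, hxn⟩)
    · exact Or.inr (Set.mem_biUnion ⟨hlσ, hwσ, h, ⟨x, hxσ, hx⟩⟩ ⟨hxσ, hxn⟩)
  have hbound : ∀ (S : Set (List ℕ)), S.Subsingleton →
      (∀ σ ∈ S, σ.length = m ∧ IsWord n σ) →
      volume (⋃ σ ∈ S, M.J σ \ M.approx (m + 1)) ≤ ENNReal.ofReal (totalGap n r (m + 1)) := by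
    intro S hS hprop
    apply vol_biUnion_subsingleton hS
    intro σ hσ
    obtain ⟨hl, hw⟩ := hprop σ hσ
    have := M.gap_volume hr hw
    rwa [hl] at this
  calc volume ((Set.Ioo a b ∩ M.approx m) \ M.approx (m + 1))
      ≤ volume ((⋃ σ ∈ Sa, M.J σ \ M.approx (m + 1)) ∪ (⋃ σ ∈ Sb, M.J σ \ M.approx (m + 1))) :=
        measure_mono hcover
    _ ≤ volume (⋃ σ ∈ Sa, M.J σ \ M.approx (m + 1)) +
        volume (⋃ σ ∈ Sb, M.J σ \ M.approx (m + 1)) := measure_union_le _ _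
    _ ≤ ENNReal.ofReal (totalGap n r (m + 1)) + ENNReal.ofReal (totalGap n r (m + 1)) := by
        gcongr
        · exact hbound Sa hSa (fun σ hσ => ⟨hσ.1, hσ.2.1⟩)
        · exact hbound Sb hSb (fun σ hσ => ⟨hσ.1, hσ.2.1⟩)
    _ = 2 * ENNReal.ofReal (totalGap n r (m + 1)) := (two_mul _).symm
section Claims

lemma totalGap_ratio (hΔ : ∀ k ≥ 1, 0 < totalGap n r k) {γ : ℝ}
    (hγdef : γ = sInf {x : ℝ | ∃ k ≥ 1, x = totalGap n r k / totalGap n r (k + 1)})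
    (hγ : 1 < γ) : ∀ k ≥ 1, totalGap n r (k + 1) ≤ totalGap n r k / γ := by
  intro k hk
  have hbdd : BddBelow {x : ℝ | ∃ k ≥ 1, x = totalGap n r k / totalGap n r (k + 1)} := by
    refine ⟨0, ?_⟩
    rintro x ⟨m, hm, rfl⟩
    exact (div_pos (hΔ m hm) (hΔ (m+1) (by omega))).le
  have hmem : totalGap n r k / totalGap n r (k + 1) ∈
      {x : ℝ | ∃ k ≥ 1, x = totalGap n r k / totalGap n r (k + 1)} := ⟨k, hk, rfl⟩
  have hle : γ ≤ totalGap n r k / totalGap n r (k + 1) := hγdef ▸ csInf_le hbdd hmem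
  have hpos : 0 < totalGap n r (k + 1) := hΔ (k+1) (by omega)
  have hγpos : 0 < γ := by linarith
  rw [le_div_iff₀ hpos] at hle
  rw [le_div_iff₀ hγpos]
  linarith

lemma totalGap_geom (hΔ : ∀ k ≥ 1, 0 < totalGap n r k) {γ : ℝ}
    (hγdef : γ = sInf {x : ℝ | ∃ k ≥ 1, x = totalGap n r k / totalGap n r (k + 1)})
    (hγ : 1 < γ) {k : ℕ} (hk : 1 ≤ k) :
    ∀ j : ℕ, totalGap n r (k + j + 1) ≤ totalGap n r k * (1/γ)^(j+1) := by
  have hγpos : 0 < γ := by linarith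
  intro j
  induction j with
  | zero =>
    have := totalGap_ratio hΔ hγdef hγ k hk
    simpa [pow_one, div_eq_mul_inv, one_div] using this
  | succ j ih =>
    have h1 : totalGap n r (k + (j+1) + 1) ≤ totalGap n r (k + j + 1) / γ := by
      have := totalGap_ratio hΔ hγdef hγ (k + j + 1) (by omega)
      convert this using 3 <;> omega
    calc totalGap n r (k + (j+1) + 1) ≤ totalGap n r (k + j + 1) / γ := h1
      _ ≤ (totalGap n r k * (1/γ)^(j+1)) / γ := by gcongr
      _ = totalGap n r k * (1/γ)^(j+2) := by ring

lemma totalGap_summable (hΔ : ∀ k ≥ 1, 0 < totalGap n r k) {γ : ℝ}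
    (hγdef : γ = sInf {x : ℝ | ∃ k ≥ 1, x = totalGap n r k / totalGap n r (k + 1)})
    (hγ : 1 < γ) {k : ℕ} (hk : 1 ≤ k) :
    Summable (fun j : ℕ => totalGap n r (k + j + 1)) := by
  have hγpos : 0 < γ := by linarith
  have h01 : (0:ℝ) ≤ 1/γ := by positivity
  have h1 : 1/γ < 1 := by rw [div_lt_one hγpos]; exact hγ
  apply Summable.of_nonneg_of_le (fun j => (hΔ (k+j+1) (by omega)).le)
    (totalGap_geom hΔ hγdef hγ hk)
  have : Summable (fun j : ℕ => totalGap n r k * ((1/γ) * (1/γ)^j)) :=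
    ((summable_geometric_of_lt_one h01 h1).mul_left _).mul_left _
  convert this using 2 with j
  ring

lemma totalGap_tsum_le (hΔ : ∀ k ≥ 1, 0 < totalGap n r k) {γ : ℝ}
    (hγdef : γ = sInf {x : ℝ | ∃ k ≥ 1, x = totalGap n r k / totalGap n r (k + 1)})
    (hγ : 1 < γ) {k : ℕ} (hk : 1 ≤ k) :
    ∑' j : ℕ, totalGap n r (k + j + 1) ≤ totalGap n r k / (γ - 1) := by
  have hγpos : 0 < γ := by linarith
  have h01 : (0:ℝ) ≤ 1/γ := by positivity
  have h1 : 1/γ < 1 := by rw [div_lt_one hγpos]; exact hγ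
  have hgeo : Summable (fun j : ℕ => totalGap n r k * (1/γ)^(j+1)) := by
    have : Summable (fun j : ℕ => totalGap n r k * ((1/γ) * (1/γ)^j)) :=
      ((summable_geometric_of_lt_one h01 h1).mul_left _).mul_left _
    convert this using 2 with j
    ring
  have hle := Summable.tsum_le_tsum (totalGap_geom hΔ hγdef hγ hk)
    (totalGap_summable hΔ hγdef hγ hk) hgeo
  refine hle.trans ?_
  have : ∑' j : ℕ, totalGap n r k * (1/γ)^(j+1)
      = totalGap n r k * (1/γ) * ∑' j : ℕ, (1/γ)^j := by
    rw [← tsum_mul_left]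
    congr 1 with j
    ring
  have hγ1 : γ - 1 ≠ 0 := by intro h; linarith
  apply le_of_eq
  rw [this, tsum_geometric_of_lt_one h01 h1, one_sub_div hγpos.ne', inv_div]
  field_simp

end Claims
section Chain

variable {X : Set ℝ} {δ : ℝ}

private def Reach (X : Set ℝ) (δ x t : ℝ) : Prop :=
  ∃ (m : ℕ) (z : Fin (m + 1) → ℝ),
    (∀ i, z i ∈ X) ∧ z 0 = x ∧ z (Fin.last m) = t ∧
      ∀ i : Fin m, |z i.castSucc - z i.succ| ≤ δ

lemma reach_self {x : ℝ} (hx : x ∈ X) : Reach X δ x x :=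
  ⟨0, fun _ => x, fun _ => hx, rfl, rfl, fun i => i.elim0⟩

lemma reach_step {x t s : ℝ} (h : Reach X δ x t) (hs : s ∈ X) (hd : |t - s| ≤ δ) :
    Reach X δ x s := by
  obtain ⟨m, z, hzX, hz0, hzl, hstep⟩ := h
  refine ⟨m + 1, Fin.snoc z s, ?_, ?_, ?_, ?_⟩
  · intro i
    induction i using Fin.lastCases with
    | last => rw [Fin.snoc_last]; exact hs
    | cast j => rw [Fin.snoc_castSucc]; exact hzX j
  · rw [show (0 : Fin (m + 2)) = Fin.castSucc 0 from (Fin.castSucc_zero).symm,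
      Fin.snoc_castSucc]; exact hz0
  · rw [Fin.snoc_last]
  · intro i
    induction i using Fin.lastCases with
    | last =>
      rw [Fin.succ_last, Fin.snoc_last, Fin.snoc_castSucc, hzl]
      exact hd
    | cast j =>
      rw [Fin.succ_castSucc, Fin.snoc_castSucc, Fin.snoc_castSucc]
      exact hstep j

lemma reach_of_le (hX : IsClosed X) (hδ : 0 < δ)
    (hgap : ∀ a ∈ X, ∀ b ∈ X, a < b → Set.Ioo a b ∩ X = ∅ → b - a ≤ δ)
    {x y : ℝ} (hx : x ∈ X) (hy : y ∈ X) (hxy : x ≤ y) : Reach X δ x y := by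
  set S : Set ℝ := {t | t ∈ X ∧ t ∈ Set.Icc x y ∧ Reach X δ x t} with hS
  have hSne : S.Nonempty := ⟨x, hx, ⟨le_refl x, hxy⟩, reach_self hx⟩
  have hSbdd : BddAbove S := ⟨y, fun t ht => ht.2.1.2⟩
  set s₀ := sSup S with hs₀
  have hs₀cl : s₀ ∈ X ∩ Set.Icc x y := by
    have h1 : s₀ ∈ closure S := csSup_mem_closure hSne hSbdd
    have h2 : closure S ⊆ X ∩ Set.Icc x y :=
      (IsClosed.closure_subset_iff (hX.inter isClosed_Icc)).mpr (fun t ht => ⟨ht.1, ht.2.1⟩)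
    exact h2 h1
  have hs₀R : Reach X δ x s₀ := by
    by_cases hmem : s₀ ∈ S
    · exact hmem.2.2
    · obtain ⟨t, htS, ht⟩ := exists_lt_of_lt_csSup hSne (show s₀ - δ < s₀ by linarith)
      have htle : t ≤ s₀ := le_csSup hSbdd htS
      exact reach_step htS.2.2 hs₀cl.1 (by rw [abs_sub_le_iff]; constructor <;> linarith)
  have hs₀S : s₀ ∈ S := ⟨hs₀cl.1, hs₀cl.2, hs₀R⟩
  by_cases hfin : s₀ = y
  · exact hfin ▸ hs₀R
  have hs₀y : s₀ < y := lt_of_le_of_ne hs₀cl.2.2 hfin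
  exfalso
  by_cases hmid : (X ∩ Set.Ioo s₀ y).Nonempty
  · set T := X ∩ Set.Ioc s₀ y with hT
    have hTne : T.Nonempty := by
      obtain ⟨u, huX, hu⟩ := hmid
      exact ⟨u, huX, hu.1, hu.2.le⟩
    have hTbdd : BddBelow T := ⟨s₀, fun t ht => ht.2.1.le⟩
    set t₀ := sInf T with ht₀
    have ht₀cl : t₀ ∈ X ∩ Set.Icc s₀ y := by
      have h1 : t₀ ∈ closure T := csInf_mem_closure hTne hTbdd
      have h2 : closure T ⊆ X ∩ Set.Icc s₀ y := by
        apply (IsClosed.closure_subset_iff (hX.inter isClosed_Icc)).mpr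
        exact fun t ht => ⟨ht.1, ht.2.1.le, ht.2.2⟩
      exact h2 h1
    rcases eq_or_lt_of_le ht₀cl.2.1 with heq | hlt
    · -- t₀ = s₀ : points of X accumulate just above s₀
      obtain ⟨u, huT, hu⟩ := exists_lt_of_csInf_lt hTne (show sInf T < s₀ + δ by rw [← ht₀, ← heq]; linarith)
      have huS : u ∈ S := by
        refine ⟨huT.1, ⟨hs₀cl.2.1.trans huT.2.1.le, huT.2.2⟩, ?_⟩
        exact reach_step hs₀R huT.1 (by rw [abs_sub_le_iff]; have := huT.2.1; constructor <;> linarith)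
      have : u ≤ s₀ := le_csSup hSbdd huS
      have : s₀ < u := huT.2.1
      linarith
    · -- s₀ < t₀ : gap between s₀ and t₀
      have hgap' : Set.Ioo s₀ t₀ ∩ X = ∅ := by
        rw [Set.eq_empty_iff_forall_notMem]
        rintro z ⟨hz, hzX⟩
        have : z ∈ T := ⟨hzX, hz.1, hz.2.le.trans ht₀cl.2.2⟩
        have := csInf_le hTbdd this
        linarith [hz.2]
      have hd := hgap s₀ hs₀cl.1 t₀ ht₀cl.1 hlt hgap'
      have ht₀S : t₀ ∈ S := by
        refine ⟨ht₀cl.1, ⟨hs₀cl.2.1.trans ht₀cl.2.1, ht₀cl.2.2⟩, ?_⟩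
        exact reach_step hs₀R ht₀cl.1 (by rw [abs_sub_le_iff]; constructor <;> linarith)
      have : t₀ ≤ s₀ := le_csSup hSbdd ht₀S
      linarith
  · -- no points of X strictly between s₀ and y
    have hgap' : Set.Ioo s₀ y ∩ X = ∅ := by
      rw [Set.eq_empty_iff_forall_notMem]
      rintro z ⟨hz, hzX⟩
      exact hmid ⟨z, hzX, hz⟩
    have hd := hgap s₀ hs₀cl.1 y hy hs₀y hgap'
    have hyS : y ∈ S := ⟨hy, ⟨hxy, le_refl y⟩, reach_step hs₀R hy (by rw [abs_sub_le_iff]; constructor <;> linarith)⟩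
    have : y ≤ s₀ := le_csSup hSbdd hyS
    linarith

lemma deltaConnected_of_gap (hX : IsClosed X) (hδ : 0 < δ)
    (hgap : ∀ a ∈ X, ∀ b ∈ X, a < b → Set.Ioo a b ∩ X = ∅ → b - a ≤ δ) :
    DeltaConnected δ X := by
  intro x hx y hy
  rcases le_total x y with hxy | hyx
  · obtain ⟨m, z, h1, h2, h3, h4⟩ := reach_of_le hX hδ hgap hx hy hxy
    exact ⟨m, z, h1, h2, h3, h4⟩
  · obtain ⟨m, z, h1, h2, h3, h4⟩ := reach_of_le hX hδ hgap hy hx hyx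
    refine ⟨m, fun i => z i.rev, fun i => h1 _, ?_, ?_, ?_⟩
    · show z (0 : Fin (m+1)).rev = x
      rw [Fin.rev_zero]; exact h3
    · show z (Fin.last m).rev = y
      rw [Fin.rev_last]; exact h2
    · intro i
      show |z i.castSucc.rev - z i.succ.rev| ≤ δ
      rw [Fin.rev_castSucc, Fin.rev_succ, abs_sub_comm]
      exact h4 i.rev

/-- **Components of approximations are well-chained.** If `Δ_k > 0` for all `k` and
`γ = inf Δ_k/Δ_{k+1} > 1`, then for every `k ≥ 1` and every connected component `U`
of `E_k`, every complementary gap of `U ∩ E` has length at most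
`2 Σ_{j≥1} Δ_{k+j} ≤ (2/(γ-1)) Δ_k`; in particular `U ∩ E` is
`(2/(γ-1)) Δ_k`-connected. -/
theorem moran_component_deltaConnected
    (n : ℕ → ℕ) (r : ℕ → ℝ)
    (hn : ∀ k ≥ 1, 2 ≤ n k)
    (hr : ∀ k ≥ 1, 0 < r k ∧ (n k : ℝ) * r k ≤ 1)
    (M : MoranStructure n r)
    (hΔ : ∀ k ≥ 1, 0 < totalGap n r k)
    (γ : ℝ)
    (hγdef : γ = sInf {x : ℝ | ∃ k ≥ 1, x = totalGap n r k / totalGap n r (k + 1)})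
    (hγ : 1 < γ) :
    ∀ k ≥ 1, ∀ U : Set ℝ, IsCC (M.approx k) U →
      (∀ a ∈ U ∩ M.moranSet, ∀ b ∈ U ∩ M.moranSet, a < b →
        Set.Ioo a b ∩ (U ∩ M.moranSet) = ∅ →
        b - a ≤ 2 * ∑' j : ℕ, totalGap n r (k + j + 1)) ∧
      2 * ∑' j : ℕ, totalGap n r (k + j + 1) ≤ 2 / (γ - 1) * totalGap n r k ∧
      DeltaConnected (2 / (γ - 1) * totalGap n r k) (U ∩ M.moranSet) := by
  intro k hk U hU
  obtain ⟨x₀, hx₀, rfl⟩ := hU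
  have hγ1 : (0:ℝ) < γ - 1 := by linarith
  have hΔk : 0 < totalGap n r k := hΔ k hk
  have hΔnn : ∀ j : ℕ, 0 ≤ totalGap n r (k + j + 1) := fun j => (hΔ (k+j+1) (by omega)).le
  have hsummable := totalGap_summable hΔ hγdef hγ hk
  -- part 2
  have h2 : 2 * ∑' j : ℕ, totalGap n r (k + j + 1) ≤ 2 / (γ - 1) * totalGap n r k := by
    have ht := totalGap_tsum_le hΔ hγdef hγ hk
    calc 2 * ∑' j : ℕ, totalGap n r (k + j + 1)
        ≤ 2 * (totalGap n r k / (γ - 1)) := by linarith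
      _ = 2 / (γ - 1) * totalGap n r k := by ring
  -- part 1
  have h1 : ∀ a ∈ connectedComponentIn (M.approx k) x₀ ∩ M.moranSet,
      ∀ b ∈ connectedComponentIn (M.approx k) x₀ ∩ M.moranSet, a < b →
      Set.Ioo a b ∩ (connectedComponentIn (M.approx k) x₀ ∩ M.moranSet) = ∅ →
      b - a ≤ 2 * ∑' j : ℕ, totalGap n r (k + j + 1) := by
    rintro a ⟨haU, haE⟩ b ⟨hbU, hbE⟩ hab hemp
    have hIooU : Set.Ioo a b ⊆ connectedComponentIn (M.approx k) x₀ :=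
      Set.Ioo_subset_Icc_self.trans
        ((isPreconnected_connectedComponentIn.ordConnected).out haU hbU)
    have hIooE : Set.Ioo a b ∩ M.moranSet = ∅ := by
      rw [Set.eq_empty_iff_forall_notMem]
      intro z hz
      have : z ∈ Set.Ioo a b ∩ (connectedComponentIn (M.approx k) x₀ ∩ M.moranSet) :=
        ⟨hz.1, hIooU hz.1, hz.2⟩
      rw [hemp] at this
      exact this
    have hIook : Set.Ioo a b ⊆ M.approx k :=
      hIooU.trans (connectedComponentIn_subset _ _)
    have hcover : Set.Ioo a b ⊆
        ⋃ j : ℕ, (Set.Ioo a b ∩ M.approx (k + j)) \ M.approx (k + j + 1) := by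
      intro x hx
      have hxE : x ∉ M.moranSet := by
        intro hxE
        have : x ∈ Set.Ioo a b ∩ M.moranSet := ⟨hx, hxE⟩
        rw [hIooE] at this
        exact this
      have hex : ∃ j : ℕ, x ∉ M.approx (k + j + 1) := by
        by_contra hcon
        push_neg at hcon
        apply hxE
        intro Ek hEk
        simp only [Set.mem_range] at hEk
        obtain ⟨m, rfl⟩ := hEk
        exact M.approx_le (by omega : m ≤ k + m + 1) (hcon m)
      classical
      set j₀ := Nat.find hex with hj₀
      have hnot : x ∉ M.approx (k + j₀ + 1) := Nat.find_spec hex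
      have hin : x ∈ M.approx (k + j₀) := by
        rcases Nat.eq_zero_or_pos j₀ with h0 | hpos
        · rw [h0]; simpa using hIook hx
        · have := Nat.find_min hex (m := j₀ - 1) (by omega)
          push_neg at this
          have heq : k + (j₀ - 1) + 1 = k + j₀ := by omega
          rwa [heq] at this
      exact Set.mem_iUnion.mpr ⟨j₀, ⟨hx, hin⟩, hnot⟩
    have hvol : ENNReal.ofReal (b - a) ≤
        ENNReal.ofReal (2 * ∑' j : ℕ, totalGap n r (k + j + 1)) := by
      calc ENNReal.ofReal (b - a) = volume (Set.Ioo a b) := (Real.volume_Ioo).symm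
        _ ≤ volume (⋃ j : ℕ, (Set.Ioo a b ∩ M.approx (k + j)) \ M.approx (k + j + 1)) :=
            measure_mono hcover
        _ ≤ ∑' j : ℕ, volume ((Set.Ioo a b ∩ M.approx (k + j)) \ M.approx (k + j + 1)) :=
            measure_iUnion_le _
        _ ≤ ∑' j : ℕ, 2 * ENNReal.ofReal (totalGap n r (k + j + 1)) := by
            apply ENNReal.tsum_le_tsum
            intro j
            exact M.level_bound hn hr hab hIooE
        _ = 2 * ENNReal.ofReal (∑' j : ℕ, totalGap n r (k + j + 1)) := by
            rw [ENNReal.tsum_mul_left, ENNReal.ofReal_tsum_of_nonneg hΔnn hsummable]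
        _ = ENNReal.ofReal (2 * ∑' j : ℕ, totalGap n r (k + j + 1)) := by
            rw [ENNReal.ofReal_mul (by norm_num : (0:ℝ) ≤ 2)]
            norm_num
    have htnn : 0 ≤ 2 * ∑' j : ℕ, totalGap n r (k + j + 1) := by
      have : 0 ≤ ∑' j : ℕ, totalGap n r (k + j + 1) := tsum_nonneg hΔnn
      linarith
    exact (ENNReal.ofReal_le_ofReal_iff htnn).mp hvol
  refine ⟨h1, h2, ?_⟩
  -- part 3
  have hEclosed : IsClosed M.moranSet := isClosed_iInter (fun m => M.isClosed_approx m)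
  have hUclosed : IsClosed (connectedComponentIn (M.approx k) x₀) := by
    apply isClosed_of_closure_subset
    apply IsPreconnected.subset_connectedComponentIn
      isPreconnected_connectedComponentIn.closure
      (subset_closure (mem_connectedComponentIn hx₀))
    exact (M.isClosed_approx k).closure_subset_iff.mpr (connectedComponentIn_subset _ _)
  have hδ : 0 < 2 / (γ - 1) * totalGap n r k :=
    mul_pos (div_pos two_pos hγ1) hΔk
  apply deltaConnected_of_gap (hUclosed.inter hEclosed) hδ
  intro a ha b hb hab hemp
  exact (h1 a ha b hb hab hemp).trans h2
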